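/- Let Y be a compact metric space, ε > 0, and F ⊆ Y an ε-separated set of cardinality n. Let μ be the uniform probability measure on F, and let ν be any probability measure whose support has cardinality m < n. Then W₁(μ, ν) ≥ ((n − m + 1)/n) · (ε/2). -/
import Mathlib


open MeasureTheory Filter Metric Set
open scoped NNReal ENNReal

noncomputable section

/-- The set of transport plans (couplings) between two measures. -/
def couplings {X : Type*} [MeasurableSpace X] (μ ν : Measure X) : Set (Measure (X × X)) :=
  {π | π.map Prod.fst = μ ∧ π.map Prod.snd = ν}

/-- The `p`-Wasserstein distance between two measures. -/
noncomputable def Wass {X : Type*} [MetricSpace X] [MeasurableSpace X] (p : ℝ)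
    (μ ν : Measure X) : ℝ :=
  sInf ((fun π : Measure (X × X) => (∫ z, dist z.1 z.2 ^ p ∂π) ^ (1 / p)) '' couplings μ ν)

/-- Covering number: minimal cardinality of an `ε`-dense set. -/
noncomputable def coverNum (X : Type*) [MetricSpace X] (ε : ℝ) : ℕ :=
  sInf {n | ∃ F : Finset X, F.card = n ∧ ∀ x : X, ∃ y ∈ F, dist x y ≤ ε}

/-- Packing number: maximal cardinality of an `ε`-separated set. -/
noncomputable def packNum (X : Type*) [MetricSpace X] (ε : ℝ) : ℕ :=
  sSup {n | ∃ F : Finset X, F.card = n ∧ ∀ x ∈ F, ∀ y ∈ F, x ≠ y → ε < dist x y}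

/-- The (topological) support of a measure. -/
def msupport {X : Type*} [TopologicalSpace X] [MeasurableSpace X] (μ : Measure X) : Set X :=
  {x | ∀ U : Set X, IsOpen U → x ∈ U → 0 < μ U}

/-- Quantization number of `μ` at scale `ε` w.r.t. the `q`-Wasserstein metric. -/
noncomputable def quantW {Y : Type*} [MetricSpace Y] [MeasurableSpace Y] (q : ℝ)
    (μ : Measure Y) (ε : ℝ) : ℕ :=
  sInf {n | ∃ ν : Measure Y, IsProbabilityMeasure ν ∧
    (∃ S : Finset Y, S.card = n ∧ ν (↑S)ᶜ = 0) ∧ Wass q μ ν ≤ ε}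

end

lemma aux_integrable {Z : Type*} [MeasurableSpace Z] [TopologicalSpace Z] [CompactSpace Z]
    [OpensMeasurableSpace Z] [T2Space Z] (π : Measure Z) [IsFiniteMeasure π] {f : Z → ℝ}
    (hf : Continuous f) : Integrable f π :=
  hf.integrable_of_hasCompactSupport (HasCompactSupport.of_compactSpace f)



/-- Per-fiber bound. -/
lemma fiber_sum_ge {Y : Type*} [MetricSpace Y] (ε : ℝ) (hε : 0 < ε) (s : Y)
    (G : Finset Y) (hG2 : 2 ≤ G.card)
    (hsep : ∀ x ∈ G, ∀ y ∈ G, x ≠ y → ε ≤ dist x y) :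
    (G.card : ℝ) * (ε / 2) ≤ ∑ x ∈ G, dist x s := by
  classical
  have hGne : G.Nonempty := Finset.card_pos.mp (by omega)
  obtain ⟨x₀, hx₀G, hx₀min⟩ := G.exists_min_image (fun x => dist x s) hGne
  set δ := dist x₀ s with hδ
  have hδnn : 0 ≤ δ := dist_nonneg
  have hA : (G.card : ℝ) * δ ≤ ∑ x ∈ G, dist x s := by
    calc (G.card : ℝ) * δ = ∑ _x ∈ G, δ := by rw [Finset.sum_const, nsmul_eq_mul]
    _ ≤ ∑ x ∈ G, dist x s := Finset.sum_le_sum fun x hx => hx₀min x hx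
  have hB : δ + ((G.card : ℝ) - 1) * (ε - δ) ≤ ∑ x ∈ G, dist x s := by
    have herase : ∀ y ∈ G.erase x₀, ε - δ ≤ dist y s := by
      intro y hy
      have hyne : y ≠ x₀ := Finset.ne_of_mem_erase hy
      have hyG : y ∈ G := Finset.mem_of_mem_erase hy
      have htri : dist y x₀ ≤ dist y s + dist s x₀ := dist_triangle y s x₀
      have hsepy : ε ≤ dist y x₀ := hsep y hyG x₀ hx₀G hyne
      have : dist s x₀ = δ := dist_comm s x₀
      linarith
    have hsum : ((G.erase x₀).card : ℝ) * (ε - δ) ≤ ∑ y ∈ G.erase x₀, dist y s := by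
      calc ((G.erase x₀).card : ℝ) * (ε - δ) = ∑ _y ∈ G.erase x₀, (ε - δ) := by
            rw [Finset.sum_const, nsmul_eq_mul]
      _ ≤ _ := Finset.sum_le_sum herase
    have hcard : ((G.erase x₀).card : ℝ) = (G.card : ℝ) - 1 := by
      rw [Finset.card_erase_of_mem hx₀G]
      have : 1 ≤ G.card := by omega
      push_cast [Nat.cast_sub this]
      ring
    rw [← Finset.sum_erase_add G _ hx₀G]
    rw [hcard] at hsum
    linarith
  have hr : (2 : ℝ) ≤ (G.card : ℝ) := by exact_mod_cast hG2
  nlinarith [hA, hB, hδnn, hε, hr]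

lemma sum_infDist_ge {Y : Type*} [MetricSpace Y] (ε : ℝ) (hε : 0 < ε)
    (F S : Finset Y) (n m : ℕ) (hn : F.card = n) (hScard : S.card = m) (hm : m < n)
    (hS : S.Nonempty)
    (hsep : ∀ x ∈ F, ∀ y ∈ F, x ≠ y → ε ≤ dist x y) :
    ((n : ℝ) - m + 1) * (ε / 2) ≤ ∑ x ∈ F, infDist x (↑S : Set Y) := by
  classical
  have hSne : (↑S : Set Y).Nonempty := by exact_mod_cast hS
  have hg : ∀ x : Y, ∃ y ∈ (↑S : Set Y), infDist x (↑S : Set Y) = dist x y :=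
    fun x => S.finite_toSet.isCompact.exists_infDist_eq_dist hSne x
  choose g hgS hgd using hg
  have hgS' : ∀ x ∈ F, g x ∈ S := fun x _ => hgS x
  -- fiber decomposition
  have hdecomp : ∑ x ∈ F, infDist x (↑S : Set Y)
      = ∑ s ∈ S, ∑ x ∈ F.filter (fun x => g x = s), infDist x (↑S : Set Y) :=
    (Finset.sum_fiberwise_of_maps_to hgS' _).symm
  set c : Y → ℕ := fun s => (F.filter (fun x => g x = s)).card with hc
  have hcard_sum : ∑ s ∈ S, c s = n := by
    rw [← hn]; exact (Finset.card_eq_sum_card_fiberwise hgS').symm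
  -- fibers: d x = dist x s on fiber of s
  have hfiber_d : ∀ s, ∀ x ∈ F.filter (fun x => g x = s), infDist x (↑S : Set Y) = dist x s := by
    intro s x hx
    rw [Finset.mem_filter] at hx
    rw [hgd x, hx.2]
  have hfiber_bound : ∀ s ∈ S, 2 ≤ c s →
      (c s : ℝ) * (ε / 2) ≤ ∑ x ∈ F.filter (fun x => g x = s), infDist x (↑S : Set Y) := by
    intro s _ h2
    rw [Finset.sum_congr rfl (hfiber_d s)]
    exact fiber_sum_ge ε hε s _ h2 (fun x hx y hy hxy =>
      hsep x (Finset.mem_of_mem_filter x hx) y (Finset.mem_of_mem_filter y hy) hxy)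
  -- T: big fibers
  set P : Y → Prop := fun s => 2 ≤ c s with hP
  have hT : ∃ s₀ ∈ S, P s₀ := by
    by_contra hcon
    push_neg at hcon
    have : ∑ s ∈ S, c s ≤ ∑ _s ∈ S, 1 := Finset.sum_le_sum (fun s hs => by
      have := hcon s hs; simp only [P] at this; omega)
    simp [hcard_sum, hScard] at this
    omega
  obtain ⟨s₀, hs₀S, hs₀P⟩ := hT
  have hsplit : ∑ s ∈ S.filter P, c s + ∑ s ∈ S.filter (fun s => ¬ P s), c s = n := by
    rw [Finset.sum_filter_add_sum_filter_not]; exact hcard_sum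
  have hsmall : ∑ s ∈ S.filter (fun s => ¬ P s), c s ≤ m - 1 := by
    calc ∑ s ∈ S.filter (fun s => ¬ P s), c s ≤ ∑ _s ∈ S.filter (fun s => ¬ P s), 1 :=
        Finset.sum_le_sum (fun s hs => by
          have := (Finset.mem_filter.mp hs).2; simp only [P] at this; omega)
      _ = (S.filter (fun s => ¬ P s)).card := by simp
      _ ≤ (S.erase s₀).card := Finset.card_le_card (fun s hs => by
          rw [Finset.mem_erase]
          refine ⟨?_, (Finset.mem_filter.mp hs).1⟩
          rintro rfl
          exact (Finset.mem_filter.mp hs).2 hs₀P)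
      _ = m - 1 := by rw [Finset.card_erase_of_mem hs₀S, hScard]
  have hbig : n - m + 1 ≤ ∑ s ∈ S.filter P, c s := by
    have hm1 : 1 ≤ m := by
      rw [← hScard]; exact Finset.card_pos.mpr ⟨s₀, hs₀S⟩
    omega
  -- conclude
  have hnn : ∀ s ∈ S, 0 ≤ ∑ x ∈ F.filter (fun x => g x = s), infDist x (↑S : Set Y) :=
    fun s _ => Finset.sum_nonneg (fun x _ => infDist_nonneg)
  calc ((n : ℝ) - m + 1) * (ε / 2) ≤ ((∑ s ∈ S.filter P, c s : ℕ) : ℝ) * (ε / 2) := by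
        apply mul_le_mul_of_nonneg_right _ (by linarith)
        have : ((n - m + 1 : ℕ) : ℝ) ≤ ((∑ s ∈ S.filter P, c s : ℕ) : ℝ) := by
          exact_mod_cast hbig
        refine le_trans ?_ this
        have hmn : m ≤ n := hm.le
        push_cast [Nat.cast_sub hmn]
        linarith
    _ = ∑ s ∈ S.filter P, (c s : ℝ) * (ε / 2) := by
        rw [← Finset.sum_mul]; push_cast; ring
    _ ≤ ∑ s ∈ S.filter P, ∑ x ∈ F.filter (fun x => g x = s), infDist x (↑S : Set Y) :=
        Finset.sum_le_sum (fun s hs => hfiber_bound s (Finset.mem_filter.mp hs).1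
          (Finset.mem_filter.mp hs).2)
    _ ≤ ∑ s ∈ S, ∑ x ∈ F.filter (fun x => g x = s), infDist x (↑S : Set Y) :=
        Finset.sum_le_sum_of_subset_of_nonneg (Finset.filter_subset _ _)
          (fun s hs _ => hnn s hs)
    _ = ∑ x ∈ F, infDist x (↑S : Set Y) := hdecomp.symm


theorem stmt17 (Y : Type*) [MetricSpace Y] [CompactSpace Y] [MeasurableSpace Y] [BorelSpace Y]
    (ε : ℝ) (hε : 0 < ε) (F : Finset Y) (n : ℕ) (hn : F.card = n) (hn0 : 0 < n)
    (hsep : ∀ x ∈ F, ∀ y ∈ F, x ≠ y → ε ≤ dist x y)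
    (ν : Measure Y) [IsProbabilityMeasure ν] (m : ℕ) (hm : m < n)
    (hνsupp : ∃ S : Finset Y, S.card = m ∧ ν (↑S)ᶜ = 0) :
    ((n - m + 1 : ℝ) / n) * (ε / 2) ≤
      Wass 1 ((n : ℝ≥0∞)⁻¹ • ∑ x ∈ F, Measure.dirac x) ν := by
  obtain ⟨S, hScard, hνS⟩ := hνsupp
  set μ : Measure Y := (n : ℝ≥0∞)⁻¹ • ∑ x ∈ F, Measure.dirac x with hμdef
  have hnE : (n : ℝ≥0∞) ≠ 0 := by exact_mod_cast hn0.ne'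
  have hnR : (0 : ℝ) < n := by exact_mod_cast hn0
  have hμuniv : μ Set.univ = 1 := by
    have : (∑ x ∈ F, Measure.dirac x) Set.univ = (n : ℝ≥0∞) := by
      rw [Measure.finset_sum_apply]
      simp [hn]
    rw [hμdef, Measure.smul_apply, this, smul_eq_mul,
      ENNReal.inv_mul_cancel hnE (ENNReal.natCast_ne_top n)]
  haveI hμprob : IsProbabilityMeasure μ := ⟨hμuniv⟩
  have hS : S.Nonempty := by
    rcases S.eq_empty_or_nonempty with h | h
    · exfalso
      rw [h] at hνS
      simp [measure_univ] at hνS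
    · exact h
  set f : Y → ℝ := fun y => infDist y (↑S : Set Y) with hfdef
  have hfc : Continuous f := continuous_infDist_pt _
  haveI : SecondCountableTopology Y := by
    haveI : TopologicalSpace.SeparableSpace Y := inferInstance
    exact UniformSpace.secondCountable_of_separable Y
  apply le_csInf
  · refine ⟨_, Set.mem_image_of_mem _ (?_ : μ.prod ν ∈ couplings μ ν)⟩
    constructor
    · rw [Measure.map_fst_prod, measure_univ, one_smul]
    · rw [Measure.map_snd_prod, hμuniv, one_smul]
  · rintro r ⟨π, ⟨hπ1, hπ2⟩, rfl⟩
    simp only [Real.rpow_one, one_div_one]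
    haveI : IsProbabilityMeasure π := by
      constructor
      have := congrArg (fun ρ : Measure Y => ρ Set.univ) hπ1
      simp only [Measure.map_apply measurable_fst MeasurableSet.univ, Set.preimage_univ] at this
      rw [this, hμuniv]
    have hd : Integrable (fun z : Y × Y => dist z.1 z.2) π :=
      aux_integrable _ (continuous_fst.dist continuous_snd)
    have h1 : Integrable (fun z : Y × Y => f z.1) π := aux_integrable _ (hfc.comp continuous_fst)
    have h2 : Integrable (fun z : Y × Y => f z.2) π := aux_integrable _ (hfc.comp continuous_snd)
    have key : (∫ z, f z.1 ∂π) - ∫ z, f z.2 ∂π ≤ ∫ z, dist z.1 z.2 ∂π := by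
      rw [← integral_sub h1 h2]
      refine integral_mono (h1.sub h2) hd fun z => ?_
      have := infDist_le_infDist_add_dist (x := z.1) (y := z.2) (s := (↑S : Set Y))
      simp only [hfdef]
      linarith [this]
    have e1 : (∫ z : Y × Y, f z.1 ∂π) = ∫ y, f y ∂μ := by
      rw [← hπ1, integral_map measurable_fst.aemeasurable hfc.aestronglyMeasurable]
    have e2 : (∫ z : Y × Y, f z.2 ∂π) = ∫ y, f y ∂ν := by
      rw [← hπ2, integral_map measurable_snd.aemeasurable hfc.aestronglyMeasurable]
    have e3 : (∫ y, f y ∂ν) = 0 := by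
      have hae : ∀ᵐ y ∂ν, f y = 0 := by
        have hnull : ν {y | ¬ f y = 0} = 0 := by
          refine measure_mono_null ?_ hνS
          intro y hy
          simp only [Set.mem_setOf_eq] at hy
          intro hyS
          exact hy (infDist_zero_of_mem hyS)
        exact hnull
      exact integral_eq_zero_of_ae hae
    have e4 : (∫ y, f y ∂μ) = (n : ℝ)⁻¹ * ∑ x ∈ F, f x := by
      rw [hμdef, integral_smul_measure, integral_finset_sum_measure
        (fun i _ => aux_integrable _ hfc)]
      simp only [integral_dirac]
      simp
    have hc : ((n : ℝ) - m + 1) * (ε / 2) ≤ ∑ x ∈ F, f x := sum_infDist_ge ε hε F S n m hn hScard hm hS hsep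
    calc ((n - m + 1 : ℝ) / n) * (ε / 2) = (n : ℝ)⁻¹ * (((n : ℝ) - m + 1) * (ε / 2)) := by
          ring
      _ ≤ (n : ℝ)⁻¹ * ∑ x ∈ F, f x := by
          apply mul_le_mul_of_nonneg_left hc (by positivity)
      _ = ∫ y, f y ∂μ := e4.symm
      _ = (∫ z, f z.1 ∂π) - ∫ z, f z.2 ∂π := by rw [e1, e2, e3, sub_zero]
      _ ≤ ∫ z, dist z.1 z.2 ∂π := key
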